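/- arXiv:2508.09529 — 3 statements merged into one kernel-verified Lean document; each statement's English description precedes it below -/
import Mathlib

section
/- Suppose a twice differentiable V : ℝⁿ → ℝ satisfies the Hamilton–Jacobi equation Σᵢ fⁱ ∂ᵢV + ½ Σᵢⱼ aⁱʲ ∂ᵢV ∂ⱼV = 0, and suppose u(x) = Z(x) exp(−V(x)/ε) with Z twice differentiable satisfying the transport equation ℒ⁰Z = 0 and the second-order correction Σᵢⱼ [½ Z ∂²ᵢⱼ aⁱʲ + ∂ᵢaⁱʲ ∂ⱼZ + ½ aⁱʲ ∂²ᵢⱼZ] = 0. Then u is a stationary solution of the Fokker–Planck equation: −Σᵢ ∂ᵢ(fⁱ u) + (ε/2) Σᵢⱼ ∂²ᵢⱼ(aⁱʲ u) = 0. -/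
open Finset

/-- First-order partial derivative `∂ᵢ g` of a function on `ℝⁿ`. -/
noncomputable def pd {n : ℕ} (i : Fin n) (g : (Fin n → ℝ) → ℝ) : (Fin n → ℝ) → ℝ :=
  fun x => fderiv ℝ g x (Pi.single i 1)

variable {n : ℕ}

lemma pd_mul (i : Fin n) (g h : (Fin n → ℝ) → ℝ) (x : Fin n → ℝ)
    (hg : DifferentiableAt ℝ g x) (hh : DifferentiableAt ℝ h x) :
    pd i (fun y => g y * h y) x = pd i g x * h x + g x * pd i h x := by
  unfold pd
  rw [fderiv_fun_mul hg hh]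
  simp
  ring

lemma pd_add (i : Fin n) (g h : (Fin n → ℝ) → ℝ) (x : Fin n → ℝ)
    (hg : DifferentiableAt ℝ g x) (hh : DifferentiableAt ℝ h x) :
    pd i (fun y => g y + h y) x = pd i g x + pd i h x := by
  unfold pd
  rw [fderiv_fun_add hg hh]; simp

lemma pd_sub (i : Fin n) (g h : (Fin n → ℝ) → ℝ) (x : Fin n → ℝ)
    (hg : DifferentiableAt ℝ g x) (hh : DifferentiableAt ℝ h x) :
    pd i (fun y => g y - h y) x = pd i g x - pd i h x := by
  unfold pd
  rw [fderiv_fun_sub hg hh]; simp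

lemma pd_mul_const (i : Fin n) (g : (Fin n → ℝ) → ℝ) (c : ℝ) (x : Fin n → ℝ)
    (hg : DifferentiableAt ℝ g x) :
    pd i (fun y => g y * c) x = pd i g x * c := by
  unfold pd
  rw [fderiv_mul_const hg]; simp; ring

lemma pd_exp (i : Fin n) (V : (Fin n → ℝ) → ℝ) (ε : ℝ) (x : Fin n → ℝ)
    (hV : DifferentiableAt ℝ V x) :
    pd i (fun y => Real.exp (-V y / ε)) x
      = -(pd i V x) / ε * Real.exp (-V x / ε) := by
  have h1 : HasFDerivAt (fun y => -V y / ε) (ε⁻¹ • (-(fderiv ℝ V x))) x := by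
    simp only [div_eq_mul_inv]
    exact (hV.hasFDerivAt.neg).mul_const ε⁻¹
  have h2 := h1.exp
  unfold pd
  rw [h2.fderiv]
  simp
  ring

lemma contDiff_pd (i : Fin n) (g : (Fin n → ℝ) → ℝ) (hg : ContDiff ℝ 2 g) :
    ContDiff ℝ 1 (pd i g) := by
  have h1 : ContDiff ℝ 1 (fderiv ℝ g) := hg.fderiv_right (le_refl _)
  exact (ContinuousLinearMap.apply ℝ ℝ (Pi.single i 1 : Fin n → ℝ)).contDiff.comp h1

/-- If `V` solves the Hamilton–Jacobi equation, `Z` solves the transport equation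
`ℒ⁰Z = 0` and the second-order correction equation, then
`u = Z exp(−V/ε)` is a stationary solution of the Fokker–Planck equation. -/
theorem wkb_stationary_fokker_planck
    (n : ℕ) (ε : ℝ) (hε : 0 < ε)
    (f : Fin n → (Fin n → ℝ) → ℝ) (hf : ∀ i, ContDiff ℝ 1 (f i))
    (a : Fin n → Fin n → (Fin n → ℝ) → ℝ) (ha : ∀ i j, ContDiff ℝ 2 (a i j))
    (hsymm : ∀ i j, a i j = a j i)
    (V : (Fin n → ℝ) → ℝ) (hV : ContDiff ℝ 2 V)
    (Z : (Fin n → ℝ) → ℝ) (hZ : ContDiff ℝ 2 Z)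
    (hHJ : ∀ x, ∑ i, f i x * pd i V x
        + (1 / 2) * ∑ i, ∑ j, a i j x * pd i V x * pd j V x = 0)
    (htransport : ∀ x,
      (∑ i, (f i x + ∑ j, a i j x * pd j V x) * pd i Z x)
        + ((∑ i, pd i (f i) x) + (1 / 2) * ∑ i, ∑ j, a i j x * pd i (pd j V) x
            + ∑ i, ∑ j, pd i (a i j) x * pd j V x) * Z x = 0)
    (hsecond : ∀ x, ∑ i, ∑ j,
        ((1 / 2) * Z x * pd i (pd j (a i j)) x
          + pd i (a i j) x * pd j Z x
          + (1 / 2) * a i j x * pd i (pd j Z) x) = 0)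
    (u : (Fin n → ℝ) → ℝ) (hu : u = fun x => Z x * Real.exp (-V x / ε)) :
    ∀ x, -(∑ i, pd i (fun y => f i y * u y) x)
        + (ε / 2) * ∑ i, ∑ j, pd i (pd j (fun y => a i j y * u y)) x = 0 := by
  intro x
  have hεne : ε ≠ 0 := ne_of_gt hε
  -- differentiability facts
  have hfD : ∀ i, Differentiable ℝ (f i) := fun i => (hf i).differentiable one_ne_zero
  have haD : ∀ i j, Differentiable ℝ (a i j) := fun i j => (ha i j).differentiable two_ne_zero
  have hVD : Differentiable ℝ V := hV.differentiable two_ne_zero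
  have hZD : Differentiable ℝ Z := hZ.differentiable two_ne_zero
  have hED : Differentiable ℝ (fun y => Real.exp (-V y / ε)) := by
    simp only [div_eq_mul_inv]
    exact (hVD.neg.mul_const ε⁻¹).exp
  have hpZ : ∀ j, Differentiable ℝ (pd j Z) :=
    fun j => (contDiff_pd j Z hZ).differentiable one_ne_zero
  have hpV : ∀ j, Differentiable ℝ (pd j V) :=
    fun j => (contDiff_pd j V hV).differentiable one_ne_zero
  have hpa : ∀ k i j, Differentiable ℝ (pd k (a i j)) :=
    fun k i j => (contDiff_pd k (a i j) (ha i j)).differentiable one_ne_zero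
  have hUD : Differentiable ℝ (fun y => Z y * Real.exp (-V y / ε)) := hZD.mul hED
  -- derivative of u
  have hpu : ∀ j, pd j (fun y => Z y * Real.exp (-V y / ε))
      = fun y => (pd j Z y - Z y * pd j V y / ε) * Real.exp (-V y / ε) := by
    intro j
    funext y
    rw [pd_mul j Z (fun y => Real.exp (-V y / ε)) y (hZD y) (hED y),
      pd_exp j V ε y (hVD y)]
    ring
  have hGD : ∀ j, Differentiable ℝ (fun y => pd j Z y - Z y * pd j V y / ε) := by
    intro j
    simp only [div_eq_mul_inv]
    exact (hpZ j).sub ((hZD.mul (hpV j)).mul_const ε⁻¹)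
  -- derivative of G j
  have hpG : ∀ i j, pd i (fun y => pd j Z y - Z y * pd j V y / ε) x
      = pd i (pd j Z) x - (pd i Z x * pd j V x + Z x * pd i (pd j V) x) / ε := by
    intro i j
    rw [pd_sub i (pd j Z) (fun y => Z y * pd j V y / ε) x (hpZ j x)
      ((by simp only [div_eq_mul_inv]; exact ((hZD.mul (hpV j)).mul_const ε⁻¹ x) :
        DifferentiableAt ℝ (fun y => Z y * pd j V y / ε) x))]
    have : pd i (fun y => Z y * pd j V y / ε) x
        = pd i (fun y => (Z y * pd j V y) * ε⁻¹) x := by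
      simp only [div_eq_mul_inv]
    rw [this, pd_mul_const i (fun y => Z y * pd j V y) ε⁻¹ x ((hZD.mul (hpV j)) x),
      pd_mul i Z (pd j V) x (hZD x) (hpV j x)]
    ring
  -- first order term
  have hterm1 : ∀ i, pd i (fun y => f i y * (Z y * Real.exp (-V y / ε))) x
      = pd i (f i) x * (Z x * Real.exp (-V x / ε))
        + f i x * ((pd i Z x - Z x * pd i V x / ε) * Real.exp (-V x / ε)) := by
    intro i
    rw [pd_mul i (f i) (fun y => Z y * Real.exp (-V y / ε)) x (hfD i x) (hUD x)]
    rw [congrFun (hpu i) x]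
  -- second order term
  have hterm2 : ∀ i j, pd i (pd j (fun y => a i j y * (Z y * Real.exp (-V y / ε)))) x
      = pd i (pd j (a i j)) x * (Z x * Real.exp (-V x / ε))
        + pd j (a i j) x * ((pd i Z x - Z x * pd i V x / ε) * Real.exp (-V x / ε))
        + (pd i (a i j) x * ((pd j Z x - Z x * pd j V x / ε) * Real.exp (-V x / ε))
          + a i j x * ((pd i (pd j Z) x - (pd i Z x * pd j V x + Z x * pd i (pd j V) x) / ε)
              * Real.exp (-V x / ε)
            + (pd j Z x - Z x * pd j V x / ε) * (-(pd i V x) / ε * Real.exp (-V x / ε)))) := by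
    intro i j
    have hinner : pd j (fun y => a i j y * (Z y * Real.exp (-V y / ε)))
        = fun y => pd j (a i j) y * (Z y * Real.exp (-V y / ε))
          + a i j y * ((pd j Z y - Z y * pd j V y / ε) * Real.exp (-V y / ε)) := by
      funext y
      rw [pd_mul j (a i j) (fun y => Z y * Real.exp (-V y / ε)) y (haD i j y) (hUD y)]
      rw [congrFun (hpu j) y]
    rw [hinner]
    rw [pd_add i (fun y => pd j (a i j) y * (Z y * Real.exp (-V y / ε)))
      (fun y => a i j y * ((pd j Z y - Z y * pd j V y / ε) * Real.exp (-V y / ε))) x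
      ((hpa j i j).mul hUD x) ((haD i j).mul ((hGD j).mul hED) x)]
    rw [pd_mul i (pd j (a i j)) (fun y => Z y * Real.exp (-V y / ε)) x (hpa j i j x) (hUD x)]
    rw [congrFun (hpu i) x]
    rw [pd_mul i (a i j)
      (fun y => (pd j Z y - Z y * pd j V y / ε) * Real.exp (-V y / ε)) x
      (haD i j x) (((hGD j).mul hED) x)]
    rw [pd_mul i (fun y => pd j Z y - Z y * pd j V y / ε)
      (fun y => Real.exp (-V y / ε)) x (hGD j x) (hED x)]
    rw [pd_exp i V ε x (hVD x), hpG i j]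
  -- rewrite the goal
  simp only [hu]
  rw [Finset.sum_congr rfl (fun i _ => hterm1 i),
      Finset.sum_congr rfl (fun i _ => Finset.sum_congr rfl (fun j _ => hterm2 i j))]
  -- normalize sums into atom combinations
  have n1 : ∑ i, (pd i (f i) x * (Z x * Real.exp (-V x / ε))
        + f i x * ((pd i Z x - Z x * pd i V x / ε) * Real.exp (-V x / ε)))
      = ((∑ i, pd i (f i) x) * Z x + (∑ i, f i x * pd i Z x)
          - (∑ i, f i x * pd i V x) * Z x / ε) * Real.exp (-V x / ε) := by
    simp only [Finset.sum_mul, Finset.sum_div, ← Finset.sum_add_distrib,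
      ← Finset.sum_sub_distrib]
    refine Finset.sum_congr rfl fun i _ => ?_
    ring
  have n2 : ∑ i, ∑ j, (pd i (pd j (a i j)) x * (Z x * Real.exp (-V x / ε))
        + pd j (a i j) x * ((pd i Z x - Z x * pd i V x / ε) * Real.exp (-V x / ε))
        + (pd i (a i j) x * ((pd j Z x - Z x * pd j V x / ε) * Real.exp (-V x / ε))
          + a i j x * ((pd i (pd j Z) x - (pd i Z x * pd j V x + Z x * pd i (pd j V) x) / ε)
              * Real.exp (-V x / ε)
            + (pd j Z x - Z x * pd j V x / ε) * (-(pd i V x) / ε * Real.exp (-V x / ε)))))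
      = ( Z x * (∑ i, ∑ j, pd i (pd j (a i j)) x)
        + (∑ i, ∑ j, pd j (a i j) x * pd i Z x)
        + (∑ i, ∑ j, pd i (a i j) x * pd j Z x)
        + (∑ i, ∑ j, a i j x * pd i (pd j Z) x)
        - ((∑ i, ∑ j, pd j (a i j) x * pd i V x) * Z x
          + (∑ i, ∑ j, pd i (a i j) x * pd j V x) * Z x
          + (∑ i, ∑ j, a i j x * pd i Z x * pd j V x)
          + (∑ i, ∑ j, a i j x * pd j Z x * pd i V x)
          + (∑ i, ∑ j, a i j x * pd i (pd j V) x) * Z x) / ε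
        + Z x * (∑ i, ∑ j, a i j x * pd i V x * pd j V x) / ε ^ 2) * Real.exp (-V x / ε) := by
    simp only [Finset.sum_mul, Finset.mul_sum, Finset.sum_div, ← Finset.sum_add_distrib,
      ← Finset.sum_sub_distrib]
    refine Finset.sum_congr rfl fun i _ => ?_
    refine Finset.sum_congr rfl fun j _ => ?_
    field_simp
    ring
  rw [n1, n2]
  -- symmetry swaps
  have comm : ∀ t : Fin n → Fin n → ℝ, ∑ i, ∑ j, t i j = ∑ i, ∑ j, t j i :=
    fun t => Finset.sum_comm (f := t)
  have sw1 : ∑ i, ∑ j, pd j (a i j) x * pd i Z x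
      = ∑ i, ∑ j, pd i (a i j) x * pd j Z x := by
    rw [comm fun i j => pd j (a i j) x * pd i Z x]
    exact Finset.sum_congr rfl fun i _ => Finset.sum_congr rfl fun j _ => by rw [hsymm i j]
  have sw2 : ∑ i, ∑ j, pd j (a i j) x * pd i V x
      = ∑ i, ∑ j, pd i (a i j) x * pd j V x := by
    rw [comm fun i j => pd j (a i j) x * pd i V x]
    exact Finset.sum_congr rfl fun i _ => Finset.sum_congr rfl fun j _ => by rw [hsymm i j]
  have sw3 : ∑ i, ∑ j, a i j x * pd j Z x * pd i V x
      = ∑ i, ∑ j, a i j x * pd i Z x * pd j V x := by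
    rw [comm fun i j => a i j x * pd j Z x * pd i V x]
    exact Finset.sum_congr rfl fun i _ => Finset.sum_congr rfl fun j _ => by rw [hsymm i j]
  rw [sw1, sw2, sw3]
  -- normalize the hypotheses
  have hT : (∑ i, f i x * pd i Z x) + (∑ i, ∑ j, a i j x * pd i Z x * pd j V x)
      + ((∑ i, pd i (f i) x) + (1 / 2) * (∑ i, ∑ j, a i j x * pd i (pd j V) x)
        + (∑ i, ∑ j, pd i (a i j) x * pd j V x)) * Z x = 0 := by
    have h := htransport x
    have e : ∑ i, (f i x + ∑ j, a i j x * pd j V x) * pd i Z x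
        = (∑ i, f i x * pd i Z x) + ∑ i, ∑ j, a i j x * pd i Z x * pd j V x := by
      simp only [add_mul, Finset.sum_mul, ← Finset.sum_add_distrib]
      refine Finset.sum_congr rfl fun i _ => ?_
      congr 1
      exact Finset.sum_congr rfl fun j _ => by ring
    rw [e] at h
    linarith
  have hS : (1 / 2) * Z x * (∑ i, ∑ j, pd i (pd j (a i j)) x)
      + (∑ i, ∑ j, pd i (a i j) x * pd j Z x)
      + (1 / 2) * (∑ i, ∑ j, a i j x * pd i (pd j Z) x) = 0 := by
    have h := hsecond x
    have e : ∑ i, ∑ j, ((1 / 2) * Z x * pd i (pd j (a i j)) x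
          + pd i (a i j) x * pd j Z x + (1 / 2) * a i j x * pd i (pd j Z) x)
        = (1 / 2) * Z x * (∑ i, ∑ j, pd i (pd j (a i j)) x)
          + (∑ i, ∑ j, pd i (a i j) x * pd j Z x)
          + (1 / 2) * (∑ i, ∑ j, a i j x * pd i (pd j Z) x) := by
      simp only [Finset.mul_sum, ← Finset.sum_add_distrib]
      refine Finset.sum_congr rfl fun i _ => ?_
      refine Finset.sum_congr rfl fun j _ => ?_
      ring
    rw [e] at h
    linarith
  have hH := hHJ x
  have hEpos := Real.exp_pos (-V x / ε)
  have hεi : ε * ε⁻¹ = 1 := mul_inv_cancel₀ hεne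
  linear_combination (Z x * Real.exp (-V x / ε) / ε) * hH
    - (Real.exp (-V x / ε)) * hT
    + (ε * Real.exp (-V x / ε)) * hS
    + (Real.exp (-V x / ε) * Z x * (∑ i, ∑ j, a i j x * pd i V x * pd j V x) / (2 * ε)
      - Real.exp (-V x / ε) * (Z x * (∑ i, ∑ j, pd i (a i j) x * pd j V x)
        + Z x * (∑ i, ∑ j, a i j x * pd i (pd j V) x) / 2
        + ∑ i, ∑ j, a i j x * pd i Z x * pd j V x)) * hεi
end

section
/- The symplectic Euler map for a smooth Hamiltonian H(p,q) on ℝ²ⁿ, defined implicitly by p' = p − h ∇_q H(p, q'), q' = q + h ∇_p H(p, q'), is symplectic: wherever it is well-defined and differentiable, its Jacobian g' satisfies ω(g'ξ, g'η) = ω(ξ, η) for all ξ, η ∈ ℝ²ⁿ, where ω is the standard symplectic form ω(ξ,η) = Σᵢ (ξ_{p_i} η_{q_i} − ξ_{q_i} η_{p_i}). -/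
open Finset

/-- The standard symplectic form on `ℝⁿ × ℝⁿ`:
`ω(ξ,η) = Σᵢ (ξ_{pᵢ} η_{qᵢ} − ξ_{qᵢ} η_{pᵢ})`. -/
def sympForm {n : ℕ} (ξ η : (Fin n → ℝ) × (Fin n → ℝ)) : ℝ :=
  ∑ i, (ξ.1 i * η.2 i - ξ.2 i * η.1 i)

/-- The `i`-th component of the gradient of `H` in the `p`-variable. -/
noncomputable def gradP {n : ℕ} (H : (Fin n → ℝ) × (Fin n → ℝ) → ℝ)
    (z : (Fin n → ℝ) × (Fin n → ℝ)) (i : Fin n) : ℝ :=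
  fderiv ℝ H z (Pi.single i 1, 0)

/-- The `i`-th component of the gradient of `H` in the `q`-variable. -/
noncomputable def gradQ {n : ℕ} (H : (Fin n → ℝ) × (Fin n → ℝ) → ℝ)
    (z : (Fin n → ℝ) × (Fin n → ℝ)) (i : Fin n) : ℝ :=
  fderiv ℝ H z (0, Pi.single i 1)

/-- The symplectic Euler map `p' = p − h∇_qH(p,q')`, `q' = q + h∇_pH(p,q')` is
symplectic: wherever it is defined and differentiable, its Jacobian preserves
the standard symplectic form. -/
theorem symplectic_euler_is_symplectic
    (n : ℕ) (H : (Fin n → ℝ) × (Fin n → ℝ) → ℝ) (hH : ContDiff ℝ 2 H)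
    (h : ℝ) (hh : 0 < h)
    (U : Set ((Fin n → ℝ) × (Fin n → ℝ))) (hU : IsOpen U)
    (g : (Fin n → ℝ) × (Fin n → ℝ) → (Fin n → ℝ) × (Fin n → ℝ))
    (hg : ∀ z ∈ U, DifferentiableAt ℝ g z)
    (himpl : ∀ z ∈ U,
      (g z).1 = z.1 - h • (fun i => gradQ H (z.1, (g z).2) i)
        ∧ (g z).2 = z.2 + h • (fun i => gradP H (z.1, (g z).2) i)) :
    ∀ z ∈ U, ∀ ξ η : (Fin n → ℝ) × (Fin n → ℝ),
      sympForm (fderiv ℝ g z ξ) (fderiv ℝ g z η) = sympForm ξ η := by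
  classical
  intro z hz ξ η
  have hgz := hg z hz
  set L := fderiv ℝ g z with hL
  -- derivative of y ↦ (y.1, (g y).2)
  set K : ((Fin n → ℝ) × (Fin n → ℝ)) →L[ℝ] ((Fin n → ℝ) × (Fin n → ℝ)) :=
    (ContinuousLinearMap.fst ℝ _ _).prod ((ContinuousLinearMap.snd ℝ _ _).comp L) with hK
  have hk : HasFDerivAt (fun y : (Fin n → ℝ) × (Fin n → ℝ) => (y.1, (g y).2)) K z :=
    HasFDerivAt.prodMk hasFDerivAt_fst hgz.hasFDerivAt.snd
  have hdH : Differentiable ℝ H := hH.differentiable (by norm_num)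
  have hdH' : ContDiff ℝ 1 (fderiv ℝ H) := hH.fderiv_right (by norm_num)
  set w : (Fin n → ℝ) × (Fin n → ℝ) := (z.1, (g z).2) with hw
  set B := fderiv ℝ (fderiv ℝ H) w with hB
  have hBd : HasFDerivAt (fderiv ℝ H) B w := (hdH'.differentiable one_ne_zero w).hasFDerivAt
  have hsymm : ∀ a b, B a b = B b a :=
    second_derivative_symmetric (fun y => (hdH y).hasFDerivAt) hBd
  have hcomp : HasFDerivAt (fun y : (Fin n → ℝ) × (Fin n → ℝ) =>
      fderiv ℝ H (y.1, (g y).2)) (B.comp K) z := hBd.comp z hk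
  -- componentwise derived equations
  have eqI : ∀ (ζ : (Fin n → ℝ) × (Fin n → ℝ)) (i : Fin n),
      (L ζ).1 i = ζ.1 i - h * B (ζ.1, (L ζ).2) (0, Pi.single i 1) := by
    intro ζ i
    have h1 : HasFDerivAt (fun y => (g y).1 i)
        (((ContinuousLinearMap.proj i).comp (ContinuousLinearMap.fst ℝ (Fin n → ℝ) (Fin n → ℝ))).comp L) z :=
      (((ContinuousLinearMap.proj i).comp (ContinuousLinearMap.fst ℝ (Fin n → ℝ) (Fin n → ℝ))).hasFDerivAt).comp z hgz.hasFDerivAt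
    have h2 :=
      hcomp.clm_apply (hasFDerivAt_const ((0 : Fin n → ℝ), Pi.single i 1) z)
    have h3 : HasFDerivAt (fun y : (Fin n → ℝ) × (Fin n → ℝ) => y.1 i)
        ((ContinuousLinearMap.proj i).comp (ContinuousLinearMap.fst ℝ (Fin n → ℝ) (Fin n → ℝ))) z :=
      ((ContinuousLinearMap.proj i).comp (ContinuousLinearMap.fst ℝ (Fin n → ℝ) (Fin n → ℝ))).hasFDerivAt
    have h4 := h3.sub (h2.const_mul h)
    have hev : (fun y => (g y).1 i) =ᶠ[nhds z] (fun y : (Fin n → ℝ) × (Fin n → ℝ) =>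
        y.1 i - h * fderiv ℝ H (y.1, (g y).2) ((0 : Fin n → ℝ), Pi.single i 1)) := by
      filter_upwards [hU.mem_nhds hz] with y hy
      have := congrFun (himpl y hy).1 i
      simpa [gradQ] using this
    have h5 := h4.congr_of_eventuallyEq hev
    have := h1.unique h5
    have := congrFun (congrArg DFunLike.coe this) ζ
    simpa [K] using this
  have eqII : ∀ (ζ : (Fin n → ℝ) × (Fin n → ℝ)) (i : Fin n),
      (L ζ).2 i = ζ.2 i + h * B (ζ.1, (L ζ).2) (Pi.single i 1, 0) := by
    intro ζ i
    have h1 : HasFDerivAt (fun y => (g y).2 i)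
        (((ContinuousLinearMap.proj i).comp (ContinuousLinearMap.snd ℝ (Fin n → ℝ) (Fin n → ℝ))).comp L) z :=
      (((ContinuousLinearMap.proj i).comp (ContinuousLinearMap.snd ℝ (Fin n → ℝ) (Fin n → ℝ))).hasFDerivAt).comp z hgz.hasFDerivAt
    have h2 :=
      hcomp.clm_apply (hasFDerivAt_const (Pi.single i 1, (0 : Fin n → ℝ)) z)
    have h3 : HasFDerivAt (fun y : (Fin n → ℝ) × (Fin n → ℝ) => y.2 i)
        ((ContinuousLinearMap.proj i).comp (ContinuousLinearMap.snd ℝ (Fin n → ℝ) (Fin n → ℝ))) z :=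
      ((ContinuousLinearMap.proj i).comp (ContinuousLinearMap.snd ℝ (Fin n → ℝ) (Fin n → ℝ))).hasFDerivAt
    have h4 := h3.add (h2.const_mul h)
    have hev : (fun y => (g y).2 i) =ᶠ[nhds z] (fun y : (Fin n → ℝ) × (Fin n → ℝ) =>
        y.2 i + h * fderiv ℝ H (y.1, (g y).2) (Pi.single i 1, (0 : Fin n → ℝ))) := by
      filter_upwards [hU.mem_nhds hz] with y hy
      have := congrFun (himpl y hy).2 i
      simpa [gradP] using this
    have h5 := h4.congr_of_eventuallyEq hev
    have := h1.unique h5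
    have := congrFun (congrArg DFunLike.coe this) ζ
    simpa [K] using this
  -- abbreviations
  set vξ : (Fin n → ℝ) × (Fin n → ℝ) := (ξ.1, (L ξ).2) with hvξ
  set vη : (Fin n → ℝ) × (Fin n → ℝ) := (η.1, (L η).2) with hvη
  -- decomposition lemmas
  have hdec1 : ∀ (c : Fin n → ℝ), (c, (0 : Fin n → ℝ)) = ∑ i, c i • ((Pi.single i 1 : Fin n → ℝ), (0 : Fin n → ℝ)) := by
    intro c
    ext j
    · simp [Prod.fst_sum, Finset.sum_apply, Pi.single_apply, mul_ite]
    · simp [Prod.snd_sum]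
  have hdec2 : ∀ (c : Fin n → ℝ), ((0 : Fin n → ℝ), c) = ∑ i, c i • ((0 : Fin n → ℝ), (Pi.single i 1 : Fin n → ℝ)) := by
    intro c
    ext j
    · simp [Prod.fst_sum]
    · simp [Prod.snd_sum, Finset.sum_apply, Pi.single_apply, mul_ite]
  have hsum1 : ∀ (v : (Fin n → ℝ) × (Fin n → ℝ)) (c : Fin n → ℝ),
      B v (c, 0) = ∑ i, c i * B v (Pi.single i 1, 0) := by
    intro v c
    rw [hdec1 c, map_sum]
    exact Finset.sum_congr rfl fun i _ => by rw [map_smul, smul_eq_mul]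
  have hsum2 : ∀ (v : (Fin n → ℝ) × (Fin n → ℝ)) (c : Fin n → ℝ),
      B v (0, c) = ∑ i, c i * B v (0, Pi.single i 1) := by
    intro v c
    rw [hdec2 c, map_sum]
    exact Finset.sum_congr rfl fun i _ => by rw [map_smul, smul_eq_mul]
  -- vξ decomposition
  have hvdec : ∀ (ζ : (Fin n → ℝ) × (Fin n → ℝ)),
      (ζ.1, (L ζ).2) = (ζ.1, (0:Fin n → ℝ)) + ((0:Fin n → ℝ), ζ.2) + h • ((0:Fin n → ℝ), fun i => B (ζ.1, (L ζ).2) (Pi.single i 1, 0)) := by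
    intro ζ
    ext j
    · simp
    · simp [eqII ζ j]
  -- key linear identities
  have key : ∀ (u v : (Fin n → ℝ) × (Fin n → ℝ)),
      B (u.1, (L u).2) (v.1, (L v).2)
        = B (u.1, (L u).2) (v.1, 0) + B (u.1, (L u).2) (0, v.2)
          + h * B (u.1, (L u).2) (0, fun i => B (v.1, (L v).2) (Pi.single i 1, 0)) := by
    intro u v
    conv_lhs => rw [hvdec v]
    rw [map_add, map_add, map_smul, smul_eq_mul]
  -- expand sympForm
  have expand : sympForm (L ξ) (L η)
      = sympForm ξ η
        + h * ((∑ i, ξ.1 i * B vη (Pi.single i 1, 0)) + (∑ i, ξ.2 i * B vη (0, Pi.single i 1))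
              - (∑ i, η.2 i * B vξ (0, Pi.single i 1)) - (∑ i, η.1 i * B vξ (Pi.single i 1, 0)))
        + h^2 * ((∑ i, B vξ (Pi.single i 1, 0) * B vη (0, Pi.single i 1))
              - (∑ i, B vη (Pi.single i 1, 0) * B vξ (0, Pi.single i 1))) := by
    unfold sympForm
    simp only [Finset.mul_sum, ← Finset.sum_sub_distrib, ← Finset.sum_add_distrib]
    refine Finset.sum_congr rfl fun i _ => ?_
    rw [eqI ξ i, eqII ξ i, eqI η i, eqII η i]
    ring
  rw [← hsum1 vη ξ.1, ← hsum2 vη ξ.2, ← hsum2 vξ η.2, ← hsum1 vξ η.1,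
    ← hsum2 vη (fun i => B vξ (Pi.single i 1, 0)),
    ← hsum2 vξ (fun i => B vη (Pi.single i 1, 0))] at expand
  have k1 := key η ξ
  have k2 := key ξ η
  have hs := hsymm vη vξ
  linear_combination expand + h * k2 - h * k1 + h * hs
end

section
/- For the figure-eight Hamiltonian system with dissipation, the function V = μH² is an exact solution of the Hamilton–Jacobi equation with identity diffusion: for f = (H_y − μ H H_x, −H_x − μ H H_y) and A = I₂, one has f·∇V + ½|∇V|² = 0, where H(x,y) = ½y² + x⁴/12 − x²/2 and μ > 0. -/
/-- For the figure-eight system with Hamiltonian `H(x,y) = ½y² + x⁴/12 − x²/2`,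
drift `f = (H_y − μ H H_x, −H_x − μ H H_y)` and identity diffusion, the function
`V = μ H²` solves the Hamilton–Jacobi equation `f·∇V + ½|∇V|² = 0`. -/
theorem figure_eight_quasipotential (μ : ℝ) (hμ : 0 < μ)
    (H : ℝ → ℝ → ℝ) (hH : H = fun x y => (1 / 2) * y ^ 2 + (1 / 12) * x ^ 4 - (1 / 2) * x ^ 2)
    (Hx Hy : ℝ → ℝ → ℝ)
    (hHx : Hx = fun x y => deriv (fun s => H s y) x)
    (hHy : Hy = fun x y => deriv (fun s => H x s) y)
    (f₁ f₂ : ℝ → ℝ → ℝ)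
    (hf₁ : f₁ = fun x y => Hy x y - μ * H x y * Hx x y)
    (hf₂ : f₂ = fun x y => -Hx x y - μ * H x y * Hy x y)
    (V : ℝ → ℝ → ℝ) (hV : V = fun x y => μ * (H x y) ^ 2)
    (Vx Vy : ℝ → ℝ → ℝ)
    (hVx : Vx = fun x y => deriv (fun s => V s y) x)
    (hVy : Vy = fun x y => deriv (fun s => V x s) y) :
    ∀ x y : ℝ,
      f₁ x y * Vx x y + f₂ x y * Vy x y
        + (1 / 2) * ((Vx x y) ^ 2 + (Vy x y) ^ 2) = 0 := by
  subst hH hHx hHy hf₁ hf₂ hV hVx hVy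
  intro x y
  have hx : HasDerivAt (fun s : ℝ => (1/2)*y^2+(1/12)*s^4-(1/2)*s^2) ((1/3)*x^3 - x) x := by
    have h := (((hasDerivAt_pow 4 x).const_mul (1/12 : ℝ)).const_add ((1/2)*y^2)).sub
      ((hasDerivAt_pow 2 x).const_mul (1/2 : ℝ))
    exact h.congr_deriv (by push_cast; ring)
  have hy : HasDerivAt (fun s : ℝ => (1/2)*s^2+(1/12)*x^4-(1/2)*x^2) y y := by
    have h := (((hasDerivAt_pow 2 y).const_mul (1/2 : ℝ)).add_const ((1/12)*x^4)).sub_const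
      ((1/2)*x^2)
    exact h.congr_deriv (by push_cast; ring)
  set Hv : ℝ := (1/2)*y^2+(1/12)*x^4-(1/2)*x^2 with hHv
  have hvx : HasDerivAt (fun s : ℝ => μ * ((1/2)*y^2+(1/12)*s^4-(1/2)*s^2)^2)
      (μ * (2 * Hv * ((1/3)*x^3 - x))) x := by
    have h := ((hx.pow 2).const_mul μ)
    exact h.congr_deriv (by push_cast; ring)
  have hvy : HasDerivAt (fun s : ℝ => μ * ((1/2)*s^2+(1/12)*x^4-(1/2)*x^2)^2)
      (μ * (2 * Hv * y)) y := by
    have h := ((hy.pow 2).const_mul μ)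
    exact h.congr_deriv (by push_cast; ring)
  simp only [hx.deriv, hy.deriv, hvx.deriv, hvy.deriv]
  ring
end
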